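/- Let S be a commutative ring with 2 = 0 and fix m ≥ 1. Let B_m = S[w_m, w_{m+1}, w_{m+2}, ...] with the S-linear derivation ∂ defined by ∂(w_m) = 0 and ∂(w_n) = w_{n-1}^2 for n > m. Then ∂^2 = 0 and the homology ker(∂)/im(∂) is a free S-module on the classes of 1 and w_m. -/

import Mathlib

open MvPolynomial

set_option synthInstance.maxHeartbeats 1000000
set_option maxHeartbeats 1000000

/-- The derivation on `B_m = S[w_m, w_{m+1}, ...]` determined by `∂(w_m) = 0` and
`∂(w_n) = w_{n-1}^2` for `n > m`. -/
noncomputable def bockDerivFrom (S : Type*) [CommRing S] (m : ℕ) :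
    Derivation S (MvPolynomial {i : ℕ // m ≤ i} S) (MvPolynomial {i : ℕ // m ≤ i} S) :=
  MvPolynomial.mkDerivation S (fun i =>
    if h : i.1 = m then 0 else (X (⟨i.1 - 1, by omega⟩ : {i : ℕ // m ≤ i})) ^ 2)

namespace Stmt15Aux
open Finsupp

abbrev BV (m : ℕ) := {i : ℕ // m ≤ i}

variable {S : Type*} [CommRing S] {m : ℕ}

def dd (m : ℕ) (d : BV m →₀ ℕ) (n : ℕ) : ℕ := if h : m ≤ n then d ⟨n, h⟩ else 0

lemma dd_apply (d : BV m →₀ ℕ) (i : BV m) : dd m d i.1 = d i := by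
  simp only [dd, dif_pos i.2]

lemma dd_zero (n : ℕ) : dd m (0 : BV m →₀ ℕ) n = 0 := by
  simp [dd]

lemma dd_ext {f g : BV m →₀ ℕ} (h : ∀ n, dd m f n = dd m g n) : f = g := by
  ext i
  have := h i.1
  simpa only [dd_apply] using this

lemma dd_add (f g : BV m →₀ ℕ) (n : ℕ) : dd m (f + g) n = dd m f n + dd m g n := by
  unfold dd; split <;> simp

lemma dd_sub (f g : BV m →₀ ℕ) (n : ℕ) : dd m (f - g) n = dd m f n - dd m g n := by
  unfold dd; split <;> simp [Finsupp.tsub_apply]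

lemma dd_single (j : BV m) (c : ℕ) (n : ℕ) :
    dd m (Finsupp.single j c) n = if n = j.1 then c else 0 := by
  unfold dd
  split
  next h =>
    rw [Finsupp.single_apply]
    by_cases hn : n = j.1
    · rw [if_pos hn, if_pos (Subtype.ext hn.symm)]
    · rw [if_neg hn, if_neg (fun he => hn (congrArg Subtype.val he).symm)]
  next h =>
    have : n ≠ j.1 := by have := j.2; omega
    rw [if_neg this]

def ip (m : ℕ) (i : BV m) : BV m := ⟨max m (i.1 - 1), le_max_left _ _⟩

lemma ip_val {i : BV m} (hi : i.1 ≠ m) : (ip m i).1 = i.1 - 1 := by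
  have := i.2
  exact max_eq_right (by omega)

noncomputable def sh (d : BV m →₀ ℕ) (i : BV m) : BV m →₀ ℕ :=
  d - Finsupp.single i 1 + Finsupp.single (ip m i) 2

lemma dd_sh {i : BV m} (hi : i.1 ≠ m) (d : BV m →₀ ℕ) (n : ℕ) :
    dd m (sh d i) n = dd m d n - (if n = i.1 then 1 else 0) + (if n = i.1 - 1 then 2 else 0) := by
  unfold sh
  rw [dd_add, dd_sub, dd_single, dd_single, ip_val hi]

def act (m : ℕ) (d : BV m →₀ ℕ) (k : ℕ) : Prop :=
  m < k ∧ (dd m d k % 2 = 1 ∨ 2 ≤ dd m d (k - 1))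

instance actDec (m : ℕ) (d : BV m →₀ ℕ) : DecidablePred (act m d) := fun k => by
  unfold act; infer_instance

def bnd (m : ℕ) (d : BV m →₀ ℕ) : ℕ := (d.support.sup fun i => i.1) + 2

lemma dd_ne_le {d : BV m →₀ ℕ} {n : ℕ} (h : dd m d n ≠ 0) :
    n ≤ d.support.sup fun i => i.1 := by
  unfold dd at h
  split at h
  · exact Finset.le_sup (f := fun i : BV m => i.1) (Finsupp.mem_support_iff.mpr h)
  · exact absurd rfl h

lemma act_le_bnd {d : BV m →₀ ℕ} {k : ℕ} (h : act m d k) : k ≤ bnd m d := by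
  obtain ⟨hk, h2 | h2⟩ := h
  · have := dd_ne_le (d := d) (n := k) (by omega)
    unfold bnd; omega
  · have := dd_ne_le (d := d) (n := k - 1) (by omega)
    unfold bnd; omega

def NN (m : ℕ) (d : BV m →₀ ℕ) : ℕ := Nat.findGreatest (act m d) (bnd m d)

def hasAct (m : ℕ) (d : BV m →₀ ℕ) : Prop := act m d (NN m d)

instance (m : ℕ) (d : BV m →₀ ℕ) : Decidable (hasAct m d) := by
  unfold hasAct; infer_instance

lemma hasAct_of {d : BV m →₀ ℕ} {k : ℕ} (h : act m d k) : hasAct m d :=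
  Nat.findGreatest_spec (act_le_bnd h) h

lemma act_le_NN {d : BV m →₀ ℕ} {k : ℕ} (h : act m d k) : k ≤ NN m d :=
  Nat.le_findGreatest (act_le_bnd h) h

lemma NN_eq_of {d : BV m →₀ ℕ} {N : ℕ} (hN : act m d N)
    (hup : ∀ k, N < k → ¬ act m d k) : NN m d = N := by
  have h1 : N ≤ NN m d := act_le_NN hN
  rcases h1.lt_or_eq with h | h
  · exact absurd (hasAct_of hN) (hup _ h)
  · exact h.symm

lemma NN_gt {d : BV m →₀ ℕ} (h : hasAct m d) : m < NN m d := h.1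

lemma dd_le_one {d : BV m →₀ ℕ} (h : hasAct m d) {n : ℕ} (hn : NN m d ≤ n) :
    dd m d n ≤ 1 := by
  by_contra hc
  have hact : act m d (n + 1) := ⟨by have := h.1; omega, Or.inr (by simp only [Nat.add_sub_cancel]; omega)⟩
  have := act_le_NN hact
  omega

lemma dd_eq_zero {d : BV m →₀ ℕ} (h : hasAct m d) {k : ℕ} (hk : NN m d < k) :
    dd m d k = 0 := by
  have h1 := dd_le_one h hk.le
  by_contra hc
  have hact : act m d k := ⟨lt_trans h.1 hk, Or.inl (by omega)⟩
  have := act_le_NN hact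
  omega

noncomputable def hx (m : ℕ) (d : BV m →₀ ℕ) : BV m →₀ ℕ :=
  d + Finsupp.single ⟨max m (NN m d), le_max_left _ _⟩ 1
    - Finsupp.single ⟨max m (NN m d - 1), le_max_left _ _⟩ 2

lemma dd_hx {d : BV m →₀ ℕ} (h : hasAct m d) (n : ℕ) :
    dd m (hx m d) n
      = dd m d n + (if n = NN m d then 1 else 0) - (if n = NN m d - 1 then 2 else 0) := by
  have h1 : max m (NN m d) = NN m d := max_eq_right h.1.le
  have h2 : max m (NN m d - 1) = NN m d - 1 := max_eq_right (by have := h.1; omega)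
  unfold hx
  rw [dd_sub, dd_add, dd_single, dd_single]
  simp only [h1, h2]

noncomputable def hfun (S : Type*) [CommRing S] (m : ℕ) (d : BV m →₀ ℕ) :
    MvPolynomial (BV m) S :=
  if _ : hasAct m d then
    (if dd m d (NN m d) % 2 = 1 then 0 else monomial (hx m d) 1)
  else 0

noncomputable def hmap (S : Type*) [CommRing S] (m : ℕ) :
    MvPolynomial (BV m) S →ₗ[S] MvPolynomial (BV m) S :=
  Finsupp.lsum S (fun d : BV m →₀ ℕ => (LinearMap.ringLmapEquivSelf S S _).symm (hfun S m d))
    ∘ₗ (AddMonoidAlgebra.coeffLinearEquiv S).toLinearMap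

lemma hmap_monomial (d : BV m →₀ ℕ) (a : S) :
    hmap S m (monomial d a) = a • hfun S m d :=
  sum_monomial_eq <| map_zero _

noncomputable def pim (S : Type*) [CommRing S] (m : ℕ) :
    MvPolynomial (BV m) S →ₗ[S] MvPolynomial (BV m) S where
  toFun p := C (coeff 0 p)
    + C (coeff (Finsupp.single ⟨m, le_refl m⟩ 1) p) * X ⟨m, le_refl m⟩
  map_add' p q := by simp only [coeff_add, map_add]; ring
  map_smul' c p := by
    simp only [coeff_smul, smul_eq_mul, RingHom.id_apply, map_mul]
    rw [smul_eq_C_mul]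
    ring

lemma pim_apply (p : MvPolynomial (BV m) S) :
    pim S m p = C (coeff 0 p)
      + C (coeff (Finsupp.single ⟨m, le_refl m⟩ 1) p) * X ⟨m, le_refl m⟩ := rfl

lemma cast_char2 (h2 : (2 : S) = 0) (k : ℕ) :
    ((k : S)) = if k % 2 = 1 then 1 else 0 := by
  have hk : k % 2 + 2 * (k / 2) = k := Nat.mod_add_div k 2
  have : ((k : S)) = ((k % 2 : ℕ) : S) := by
    conv_lhs => rw [← hk]
    push_cast
    rw [h2]
    ring
  rw [this]
  rcases Nat.mod_two_eq_zero_or_one k with h | h <;> simp [h]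

lemma sh_eq {i j : BV m} (hj : j.1 = i.1 - 1) (hi : i.1 ≠ m) (d : BV m →₀ ℕ) :
    d - Finsupp.single i 1 + Finsupp.single j 2 = sh d i := by
  have : j = ip m i := Subtype.ext (by rw [hj, ip_val hi])
  rw [this]
  rfl

lemma D_def : bockDerivFrom S m = MvPolynomial.mkDerivation S (fun i : BV m =>
    if h : i.1 = m then 0 else (X (⟨i.1 - 1, by omega⟩ : BV m)) ^ 2) := rfl

lemma D_mono (h2 : (2 : S) = 0) (d : BV m →₀ ℕ) (T : Finset (BV m)) (hT : d.support ⊆ T) :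
    bockDerivFrom S m (monomial d (1 : S)) =
      ∑ i ∈ T, if i.1 ≠ m ∧ d i % 2 = 1 then monomial (sh d i) (1 : S) else 0 := by
  have step : ∀ i : BV m,
      (monomial (d - Finsupp.single i 1) ((d i : S))) •
        (if h : i.1 = m then (0 : MvPolynomial (BV m) S)
          else (X (⟨i.1 - 1, by omega⟩ : BV m)) ^ 2)
      = if i.1 ≠ m ∧ d i % 2 = 1 then monomial (sh d i) (1 : S) else 0 := by
    intro i
    by_cases him : i.1 = m
    · rw [dif_pos him, smul_zero, if_neg (by tauto)]
    · rw [dif_neg him, smul_eq_mul, X_pow_eq_monomial, monomial_mul, mul_one,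
        sh_eq rfl him, cast_char2 h2]
      by_cases hp : d i % 2 = 1
      · rw [if_pos hp, if_pos ⟨him, hp⟩]
      · rw [if_neg hp, if_neg (by tauto), monomial_zero]
  rw [D_def, mkDerivation_monomial, one_smul, Finsupp.sum,
    Finset.sum_congr rfl (fun i _ => step i)]
  exact Finset.sum_subset hT (fun i _ hi => by
    rw [if_neg]
    have : d i = 0 := Finsupp.notMem_support_iff.mp hi
    simp [this])

lemma dd_low {d : BV m →₀ ℕ} {n : ℕ} (hn : n < m) : dd m d n = 0 := by
  unfold dd
  rw [dif_neg (by omega)]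

lemma notAct_all {d : BV m →₀ ℕ} (H : ¬ hasAct m d) : ∀ k, ¬ act m d k :=
  fun _ hk => H (hasAct_of hk)

lemma noAct_classify {d : BV m →₀ ℕ} (H : ¬ hasAct m d) :
    d = 0 ∨ d = Finsupp.single ⟨m, le_refl m⟩ 1 := by
  have hA := notAct_all H
  have hle : ∀ n, m ≤ n → dd m d n ≤ 1 := by
    intro n hn
    by_contra hc
    exact hA (n + 1) ⟨by omega, Or.inr (by simp only [Nat.add_sub_cancel]; omega)⟩
  have hz : ∀ k, m < k → dd m d k = 0 := by
    intro k hk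
    have h1 := hle k (by omega)
    have h2 := hA k
    unfold act at h2
    push_neg at h2
    have := h2 hk
    omega
  by_cases h0 : dd m d m = 0
  · left
    refine dd_ext fun n => ?_
    rw [dd_zero]
    rcases lt_trichotomy n m with h | h | h
    · exact dd_low h
    · rw [h, h0]
    · exact hz n h
  · right
    have h1 : dd m d m = 1 := by have := hle m le_rfl; omega
    refine dd_ext fun n => ?_
    rw [dd_single]
    rcases lt_trichotomy n m with h | h | h
    · rw [if_neg (by simp; omega), dd_low h]
    · rw [if_pos (by simp [h]), h, h1]
    · rw [if_neg (by simp; omega), hz n h]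

lemma noAct_zero : ¬ hasAct m (0 : BV m →₀ ℕ) := by
  intro h
  rcases h.2 with h' | h' <;> rw [dd_zero] at h' <;> omega

lemma noAct_single : ¬ hasAct m (Finsupp.single (⟨m, le_refl m⟩ : BV m) 1) := by
  intro h
  have hlt := h.1
  have hv : ((⟨m, le_refl m⟩ : BV m) : ℕ) = m := rfl
  rcases h.2 with h' | h' <;> rw [dd_single, hv] at h' <;> revert h' <;>
    split <;> intro h' <;> omega

lemma single_ne_zero' : (Finsupp.single (⟨m, le_refl m⟩ : BV m) 1 : BV m →₀ ℕ) ≠ 0 :=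
  fun h => one_ne_zero (Finsupp.single_eq_zero.mp h)

lemma pim_mono_none {d : BV m →₀ ℕ} (H : ¬ hasAct m d) (a : S) :
    pim S m (monomial d a) = monomial d a := by
  rcases noAct_classify H with h | h <;> subst h
  · rw [pim_apply, coeff_monomial, if_pos rfl, coeff_monomial,
      if_neg (fun h => single_ne_zero' h.symm), map_zero, zero_mul, add_zero,
      monomial_zero']
  · rw [pim_apply, coeff_monomial, if_neg (fun h => single_ne_zero' h),
      coeff_monomial, if_pos rfl, map_zero, zero_add, C_mul_X_eq_monomial]

lemma hasAct_ne {d : BV m →₀ ℕ} (h : hasAct m d) :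
    d ≠ 0 ∧ d ≠ Finsupp.single ⟨m, le_refl m⟩ 1 := by
  constructor
  · intro he; rw [he] at h; exact noAct_zero h
  · intro he; rw [he] at h; exact noAct_single h

lemma pim_mono_act {d : BV m →₀ ℕ} (h : hasAct m d) (a : S) :
    pim S m (monomial d a) = 0 := by
  obtain ⟨h1, h2⟩ := hasAct_ne h
  rw [pim_apply, coeff_monomial, if_neg (fun he => h1 he), coeff_monomial,
    if_neg (fun he => h2 he)]
  simp

section Cases

variable {d : BV m →₀ ℕ} {N : ℕ}

/-- Case 1, the term `k = N`: `h(∂-term at N) = original monomial`. -/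
lemma case1 (h : hasAct m d) (hN : m < N) (hNN : NN m d = N)
    (hz : ∀ k, N < k → dd m d k = 0) (hd1 : dd m d N = 1) (hNle : m ≤ N) :
    hfun S m (sh d ⟨N, hNle⟩) = monomial d 1 := by
  have hNm : ((⟨N, hNle⟩ : BV m) : ℕ) ≠ m := by show N ≠ m; omega
  have E : ∀ n, dd m (sh d ⟨N, hNle⟩) n
      = dd m d n - (if n = N then 1 else 0) + (if n = N - 1 then 2 else 0) :=
    fun n => dd_sh hNm d n
  have hactN : act m (sh d ⟨N, hNle⟩) N := by
    refine ⟨hN, Or.inr ?_⟩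
    rw [E (N - 1), if_neg (by omega), if_pos rfl]
    omega
  have hup : ∀ k, N < k → ¬ act m (sh d ⟨N, hNle⟩) k := by
    intro k hk hc
    rcases hc.2 with hodd | hge
    · rw [E k, if_neg (by omega), if_neg (by omega)] at hodd
      have := hz k hk; omega
    · rw [E (k - 1)] at hge
      by_cases hk1 : k - 1 = N
      · rw [if_pos hk1, if_neg (by omega)] at hge
        have hdk : dd m d (k - 1) = 1 := by rw [hk1]; exact hd1
        omega
      · rw [if_neg hk1, if_neg (by omega)] at hge
        have hdk : dd m d (k - 1) = 0 := hz _ (by omega)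
        omega
  have h' : hasAct m (sh d ⟨N, hNle⟩) := hasAct_of hactN
  have hNN' : NN m (sh d ⟨N, hNle⟩) = N := NN_eq_of hactN hup
  have heven : ¬ dd m (sh d ⟨N, hNle⟩) (NN m (sh d ⟨N, hNle⟩)) % 2 = 1 := by
    rw [hNN', E N, if_pos rfl, if_neg (by omega)]
    omega
  have hx_eq : hx m (sh d ⟨N, hNle⟩) = d := by
    refine dd_ext fun n => ?_
    rw [dd_hx h' n, hNN', E n]
    by_cases h1 : n = N
    · subst h1; split_ifs <;> omega
    · by_cases hn2 : n = N - 1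
      · subst hn2; split_ifs <;> omega
      · split_ifs <;> omega
  simp only [hfun]
  rw [dif_pos h', if_neg heven, hx_eq]

/-- Lower terms in case 1 (odd at top): `hfun` of the shifted exponent vanishes. -/
lemma caseOddLower (h : hasAct m d) (hN : m < N) (hNN : NN m d = N)
    (hle : ∀ n, N ≤ n → dd m d n ≤ 1) (hz : ∀ k, N < k → dd m d k = 0)
    (hd1 : dd m d N = 1) {i : BV m} (him : i.1 ≠ m) (hik : i.1 < N) :
    hfun S m (sh d i) = 0 := by
  have E : ∀ n, dd m (sh d i) n
      = dd m d n - (if n = i.1 then 1 else 0) + (if n = i.1 - 1 then 2 else 0) :=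
    fun n => dd_sh him d n
  have hmi : m < i.1 := lt_of_le_of_ne i.2 (Ne.symm him)
  have hactN : act m (sh d i) N := by
    refine ⟨hN, Or.inl ?_⟩
    rw [E N, if_neg (by omega), if_neg (by omega)]
    omega
  have hup : ∀ k, N < k → ¬ act m (sh d i) k := by
    intro k hk hc
    rcases hc.2 with hodd | hge
    · rw [E k, if_neg (by omega), if_neg (by omega)] at hodd
      have := hz k hk; omega
    · rw [E (k - 1), if_neg (by omega), if_neg (by omega)] at hge
      have := hle (k - 1) (by omega); omega
  have h' : hasAct m (sh d i) := hasAct_of hactN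
  have hNN' : NN m (sh d i) = N := NN_eq_of hactN hup
  have hodd' : dd m (sh d i) (NN m (sh d i)) % 2 = 1 := by
    rw [hNN', E N, if_neg (by omega), if_neg (by omega)]
    omega
  simp only [hfun]
  rw [dif_pos h', if_pos hodd']

/-- Lower terms in case 2 (even at top): `hfun` of the shift of `d` is the shift of `hx d`. -/
lemma caseEvenLower (h : hasAct m d) (hN : m < N) (hNN : NN m d = N)
    (hle : ∀ n, N ≤ n → dd m d n ≤ 1) (hz : ∀ k, N < k → dd m d k = 0)
    (hd0 : dd m d N = 0) (hge2 : 2 ≤ dd m d (N - 1))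
    {i : BV m} (him : i.1 ≠ m) (hik : i.1 < N) (hoddi : dd m d i.1 % 2 = 1) :
    hfun S m (sh d i) = monomial (sh (hx m d) i) 1 := by
  have E : ∀ n, dd m (sh d i) n
      = dd m d n - (if n = i.1 then 1 else 0) + (if n = i.1 - 1 then 2 else 0) :=
    fun n => dd_sh him d n
  have hmi : m < i.1 := lt_of_le_of_ne i.2 (Ne.symm him)
  have hactN : act m (sh d i) N := by
    refine ⟨hN, Or.inr ?_⟩
    by_cases hk1 : i.1 = N - 1
    · rw [E (N - 1), if_pos (by omega), if_neg (by omega)]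
      have : dd m d (N - 1) % 2 = 1 := by rw [← hk1]; exact hoddi
      omega
    · rw [E (N - 1), if_neg (by omega), if_neg (by omega)]
      omega
  have hup : ∀ k, N < k → ¬ act m (sh d i) k := by
    intro k hk hc
    rcases hc.2 with hodd | hge
    · rw [E k, if_neg (by omega), if_neg (by omega)] at hodd
      have := hz k hk; omega
    · rw [E (k - 1), if_neg (by omega), if_neg (by omega)] at hge
      have := hle (k - 1) (by omega); omega
  have h' : hasAct m (sh d i) := hasAct_of hactN
  have hNN' : NN m (sh d i) = N := NN_eq_of hactN hup
  have heven : ¬ dd m (sh d i) (NN m (sh d i)) % 2 = 1 := by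
    rw [hNN', E N, if_neg (by omega), if_neg (by omega)]
    omega
  have hxeq : hx m (sh d i) = sh (hx m d) i := by
    refine dd_ext fun n => ?_
    rw [dd_hx h' n, hNN', E n, dd_sh him (hx m d) n, dd_hx h n, hNN]
    by_cases h1 : n = N - 1
    · subst h1; split_ifs <;> omega
    · split_ifs <;> omega
  simp only [hfun]
  rw [dif_pos h', if_neg heven, hxeq]

end Cases

lemma key1 (h2 : (2 : S) = 0) (d : BV m →₀ ℕ) :
    bockDerivFrom S m (hfun S m d) + hmap S m (bockDerivFrom S m (monomial d (1 : S)))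
      + pim S m (monomial d (1 : S)) = monomial d 1 := by
  have hxx : ∀ x : MvPolynomial (BV m) S, x + x = 0 := fun x => by
    rw [← two_smul S x, h2, zero_smul]
  have hterm : ∀ d' : BV m →₀ ℕ, ∀ i : BV m,
      hmap S m (if i.1 ≠ m ∧ d' i % 2 = 1 then monomial (sh d' i) (1 : S) else 0)
      = if i.1 ≠ m ∧ d' i % 2 = 1 then hfun S m (sh d' i) else 0 := by
    intro d' i
    split_ifs with hc
    · rw [hmap_monomial, one_smul]
    · exact map_zero _
  by_cases h : hasAct m d
  · have hN : m < NN m d := h.1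
    have hle : ∀ n, NN m d ≤ n → dd m d n ≤ 1 := fun n hn => dd_le_one h hn
    have hz : ∀ k, NN m d < k → dd m d k = 0 := fun k hk => dd_eq_zero h hk
    rw [pim_mono_act h, add_zero]
    by_cases hodd : dd m d (NN m d) % 2 = 1
    · -- case 1 : top variable is odd
      have hd1 : dd m d (NN m d) = 1 := by have := hle _ le_rfl; omega
      have hfd : hfun S m d = 0 := by simp only [hfun]; rw [dif_pos h, if_pos hodd]
      rw [hfd, map_zero, zero_add]
      rw [D_mono h2 d d.support Finset.Subset.rfl, map_sum,
        Finset.sum_congr rfl fun i _ => hterm d i]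
      have hdvN : d ⟨NN m d, hN.le⟩ = dd m d (NN m d) := (dd_apply d _).symm
      have hmem : (⟨NN m d, hN.le⟩ : BV m) ∈ d.support := by
        rw [Finsupp.mem_support_iff, hdvN]; omega
      rw [Finset.sum_eq_single_of_mem _ hmem ?_]
      · rw [if_pos ⟨by show NN m d ≠ m; omega, by rw [hdvN]; exact hodd⟩]
        exact case1 h hN rfl hz hd1 hN.le
      · intro i hi hne
        by_cases hc : i.1 ≠ m ∧ d i % 2 = 1
        · rw [if_pos hc]
          have hact : act m d i.1 :=
            ⟨lt_of_le_of_ne i.2 (Ne.symm hc.1), Or.inl (by rw [dd_apply]; exact hc.2)⟩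
          have hik : i.1 < NN m d := by
            have h1 := act_le_NN hact
            have h3 : i.1 ≠ NN m d := fun he => hne (Subtype.ext he)
            omega
          exact caseOddLower h hN rfl hle hz hd1 hc.1 hik
        · rw [if_neg hc]
    · -- case 2 : top variable is even
      have hd0 : dd m d (NN m d) = 0 := by have := hle _ le_rfl; omega
      have hge2 : 2 ≤ dd m d (NN m d - 1) := by
        rcases h.2 with h' | h'
        · exact absurd h' hodd
        · exact h'
      have hfd : hfun S m d = monomial (hx m d) 1 := by
        simp only [hfun]; rw [dif_pos h, if_neg hodd]
      rw [hfd]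
      have Ee : ∀ n, dd m (hx m d) n
          = dd m d n + (if n = NN m d then 1 else 0)
            - (if n = NN m d - 1 then 2 else 0) := fun n => dd_hx h n
      set vN : BV m := ⟨NN m d, hN.le⟩ with hvN
      have hvm : (vN : ℕ) ≠ m := by show NN m d ≠ m; omega
      set T : Finset (BV m) := (d.support ∪ (hx m d).support) ∪ {vN} with hT
      have hsub1 : d.support ⊆ T := fun x hx' => by
        simp only [hT, Finset.mem_union]; tauto
      have hsub2 : (hx m d).support ⊆ T := fun x hx' => by
        simp only [hT, Finset.mem_union]; tauto
      have hvT : vN ∈ T := by simp [hT]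
      rw [D_mono h2 (hx m d) T hsub2, D_mono h2 d T hsub1, map_sum,
        Finset.sum_congr rfl fun i _ => hterm d i, ← Finset.sum_add_distrib]
      have hpoint : ∀ i ∈ T,
          ((if i.1 ≠ m ∧ (hx m d) i % 2 = 1 then monomial (sh (hx m d) i) (1:S) else 0)
            + (if i.1 ≠ m ∧ d i % 2 = 1 then hfun S m (sh d i) else 0))
          = if i = vN then monomial d 1 else 0 := by
        intro i _
        by_cases hiN : i = vN
        · subst hiN
          have hde : (hx m d) vN = 1 := by
            rw [← dd_apply (hx m d) vN]
            show dd m (hx m d) (NN m d) = 1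
            rw [Ee, if_pos rfl, if_neg (by omega)]
            omega
          have hdd : d vN = 0 := by
            rw [← dd_apply d vN]
            exact hd0
          have hshe : sh (hx m d) vN = d := by
            refine dd_ext fun n => ?_
            have Es : dd m (sh (hx m d) vN) n
                = dd m (hx m d) n - (if n = NN m d then 1 else 0)
                  + (if n = NN m d - 1 then 2 else 0) := dd_sh hvm (hx m d) n
            rw [Es, Ee n]
            by_cases h1 : n = NN m d - 1
            · subst h1; split_ifs <;> omega
            · split_ifs <;> omega
          rw [if_pos ⟨hvm, by rw [hde]⟩, if_neg (by rw [hdd]; simp), add_zero,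
            if_pos rfl, hshe]
        · have hiN' : i.1 ≠ NN m d := fun he => hiN (Subtype.ext he)
          have hpar : (hx m d) i % 2 = d i % 2 := by
            rw [← dd_apply (hx m d) i, ← dd_apply d i, Ee i.1, if_neg hiN']
            by_cases h1 : i.1 = NN m d - 1
            · have : 2 ≤ dd m d i.1 := by rw [h1]; exact hge2
              rw [if_pos h1]
              omega
            · rw [if_neg h1]
              omega
          by_cases hcd : i.1 ≠ m ∧ d i % 2 = 1
          · have hact : act m d i.1 :=
              ⟨lt_of_le_of_ne i.2 (Ne.symm hcd.1), Or.inl (by rw [dd_apply]; exact hcd.2)⟩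
            have hik : i.1 < NN m d := by
              have := act_le_NN hact; omega
            have hce : i.1 ≠ m ∧ (hx m d) i % 2 = 1 := ⟨hcd.1, by rw [hpar]; exact hcd.2⟩
            rw [if_pos hce, if_pos hcd, if_neg hiN,
              caseEvenLower h hN rfl hle hz hd0 hge2 hcd.1 hik
                (by rw [dd_apply]; exact hcd.2)]
            exact hxx _
          · have hce : ¬ (i.1 ≠ m ∧ (hx m d) i % 2 = 1) := by
              intro hce
              exact hcd ⟨hce.1, by rw [← hpar]; exact hce.2⟩
            rw [if_neg hce, if_neg hcd, if_neg hiN, add_zero]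
      rw [Finset.sum_congr rfl hpoint, Finset.sum_ite_eq' T vN fun _ => monomial d 1,
        if_pos hvT]
  · -- no active pair : `d` is a homology exponent
    have hD : bockDerivFrom S m (monomial d (1 : S)) = 0 := by
      rw [D_mono h2 d d.support Finset.Subset.rfl]
      refine Finset.sum_eq_zero fun i _ => ?_
      rw [if_neg]
      rintro ⟨him, hoddi⟩
      exact h (hasAct_of ⟨lt_of_le_of_ne i.2 (Ne.symm him),
        Or.inl (by rw [dd_apply]; exact hoddi)⟩)
    have hfd : hfun S m d = 0 := dif_neg h
    rw [hD, hfd, map_zero, map_zero, zero_add, zero_add, pim_mono_none h]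

lemma key_all (h2 : (2 : S) = 0) (p : MvPolynomial (BV m) S) :
    bockDerivFrom S m (hmap S m p) + hmap S m (bockDerivFrom S m p) + pim S m p = p := by
  induction p using MvPolynomial.induction_on' with
  | monomial u a =>
    have hm : (monomial u a : MvPolynomial (BV m) S) = a • monomial u 1 := by
      rw [smul_monomial, smul_eq_mul, mul_one]
    rw [hm]
    simp only [map_smul, Derivation.map_smul, hmap_monomial, one_smul]
    rw [← smul_add, ← smul_add, key1 h2 u]
  | add p q hp hq =>
    simp only [map_add]
    linear_combination (norm := ring_nf) hp + hq

lemma D2 (h2 : (2 : S) = 0) (p : MvPolynomial (BV m) S) :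
    bockDerivFrom S m (bockDerivFrom S m p) = 0 := by
  have hxx : ∀ x : MvPolynomial (BV m) S, x + x = 0 := fun x => by
    rw [← two_smul S x, h2, zero_smul]
  have hX : ∀ i : BV m, bockDerivFrom S m (bockDerivFrom S m (X i)) = 0 := by
    intro i
    rw [D_def, mkDerivation_X]
    split_ifs with hi
    · exact map_zero _
    · rw [← D_def, sq, Derivation.leibniz]
      simp only [smul_eq_mul]
      exact hxx _
  induction p using MvPolynomial.induction_on with
  | C a => rw [derivation_C, map_zero]
  | add p q hp hq => rw [map_add, map_add, hp, hq, add_zero]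
  | mul_X p i hp =>
    rw [Derivation.leibniz]
    simp only [smul_eq_mul]
    rw [map_add, Derivation.leibniz, Derivation.leibniz]
    simp only [smul_eq_mul]
    rw [hp, hX i, mul_zero, mul_zero, zero_add, zero_add,
      mul_comm (bockDerivFrom S m (X i)) (bockDerivFrom S m p)]
    exact hxx _

lemma hasAct_sh {d : BV m →₀ ℕ} {i : BV m} (him : i.1 ≠ m) : hasAct m (sh d i) := by
  have hmi : m < i.1 := lt_of_le_of_ne i.2 (Ne.symm him)
  refine hasAct_of (k := i.1) ⟨hmi, Or.inr ?_⟩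
  rw [dd_sh him, if_neg (by omega), if_pos rfl]
  omega

lemma pim_D (h2 : (2 : S) = 0) (q : MvPolynomial (BV m) S) :
    pim S m (bockDerivFrom S m q) = 0 := by
  induction q using MvPolynomial.induction_on' with
  | monomial u a =>
    have hm : (monomial u a : MvPolynomial (BV m) S) = a • monomial u 1 := by
      rw [smul_monomial, smul_eq_mul, mul_one]
    rw [hm, Derivation.map_smul, map_smul, D_mono h2 u u.support Finset.Subset.rfl,
      map_sum]
    rw [Finset.sum_eq_zero, smul_zero]
    intro i _
    split_ifs with hc
    · exact pim_mono_act (hasAct_sh hc.1) 1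
    · exact map_zero _
  | add p q hp hq => rw [map_add, map_add, hp, hq, add_zero]

end Stmt15Aux

/-- If `2 = 0` in `S`, then `∂² = 0` on `B_m`, and the homology `ker ∂ / im ∂` is a free
`S`-module on the classes of `1` and `w_m`: every kernel element is congruent mod `im ∂`
to `s·1 + t·w_m`, and `s·1 + t·w_m ∈ im ∂` forces `s = t = 0`. -/
theorem stmt15 (S : Type*) [CommRing S] (h2 : (2 : S) = 0) (m : ℕ) (hm : 1 ≤ m) :
    (∀ p : MvPolynomial {i : ℕ // m ≤ i} S,
      bockDerivFrom S m (bockDerivFrom S m p) = 0)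
    ∧ (∀ p : MvPolynomial {i : ℕ // m ≤ i} S, bockDerivFrom S m p = 0 →
        ∃ s t : S, ∃ q : MvPolynomial {i : ℕ // m ≤ i} S,
          p - (C s + C t * X ⟨m, le_refl m⟩) = bockDerivFrom S m q)
    ∧ (∀ s t : S,
        (∃ q : MvPolynomial {i : ℕ // m ≤ i} S,
          bockDerivFrom S m q = C s + C t * X ⟨m, le_refl m⟩) →
        s = 0 ∧ t = 0) := by
  refine ⟨fun p => Stmt15Aux.D2 h2 p, fun p hp => ?_, fun s t hst => ?_⟩
  · refine ⟨MvPolynomial.coeff 0 p,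
      MvPolynomial.coeff (Finsupp.single ⟨m, le_refl m⟩ 1) p, Stmt15Aux.hmap S m p, ?_⟩
    have hk := Stmt15Aux.key_all h2 p
    rw [hp, map_zero, add_zero] at hk
    have hpim : Stmt15Aux.pim S m p
        = C (coeff 0 p) + C (coeff (Finsupp.single ⟨m, le_refl m⟩ 1) p)
            * X ⟨m, le_refl m⟩ :=
      Stmt15Aux.pim_apply p
    rw [← hpim, sub_eq_iff_eq_add]
    exact hk.symm
  · obtain ⟨q, hq⟩ := hst
    have h0 := Stmt15Aux.pim_D h2 q
    rw [hq, Stmt15Aux.pim_apply] at h0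
    have e1 : coeff 0 (C s + C t * X (⟨m, le_refl m⟩ : {i : ℕ // m ≤ i})) = s := by
      rw [coeff_add, coeff_C, if_pos rfl, C_mul_X_eq_monomial, coeff_monomial,
        if_neg (fun h => Stmt15Aux.single_ne_zero' h), add_zero]
    have e2 : coeff (Finsupp.single (⟨m, le_refl m⟩ : {i : ℕ // m ≤ i}) 1)
        (C s + C t * X (⟨m, le_refl m⟩ : {i : ℕ // m ≤ i})) = t := by
      rw [coeff_add, coeff_C, if_neg (fun h => Stmt15Aux.single_ne_zero' h.symm),
        C_mul_X_eq_monomial, coeff_monomial, if_pos rfl, zero_add]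
    rw [e1, e2] at h0
    constructor
    · have hs := congrArg (coeff 0) h0
      rwa [e1, coeff_zero] at hs
    · have ht := congrArg (coeff (Finsupp.single (⟨m, le_refl m⟩ : {i : ℕ // m ≤ i}) 1)) h0
      rwa [e2, coeff_zero] at ht
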